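/- For every μ ∈ D(B), the image B̂ = {f̂ : f ∈ B} of B under the Gelfand transform is dense in the real Hilbert space L²(Δ, μ̂; ℝ). -/

import Mathlib

open MeasureTheory Filter Topology BoundedContinuousFunction
open scoped ZeroAtInfty ENNReal

/-- The complexification of a bounded real-valued function: we regard a bounded real
function on `X` as a bounded complex function. (`X` carries the discrete topology, so
`X →ᵇ ℝ` is exactly the space of bounded real-valued functions on `X`.) -/
noncomputable def cplx {X : Type*} [TopologicalSpace X] (f : X →ᵇ ℝ) : X →ᵇ ℂ :=
  BoundedContinuousFunction.comp Complex.ofReal Complex.isometry_ofReal.lipschitz f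

/-- `A(B)`: the closure, in the supremum norm, of the complexification `B + iB` of a
set `B` of bounded real-valued functions, inside the C*-algebra of all bounded
complex-valued functions on `X`. -/
noncomputable def AofB {X : Type*} [TopologicalSpace X] (B : Set (X →ᵇ ℝ)) : Set (X →ᵇ ℂ) :=
  closure {a : X →ᵇ ℂ | ∃ f ∈ B, ∃ g ∈ B, a = cplx f + Complex.I • cplx g}

/-- Clamping to `[0,1]` is 1-Lipschitz towards points of `[0,1]`. -/
lemma clamp_abs_le_aux {a b : ℝ} (hb : b ∈ Set.Icc (0:ℝ) 1) :
    |min (max a 0) 1 - b| ≤ |a - b| := by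
  have hb' : b = min (max b 0) 1 := by rw [max_eq_left hb.1, min_eq_left hb.2]
  nth_rewrite 1 [hb']
  calc |min (max a 0) 1 - min (max b 0) 1| ≤ max |max a 0 - max b 0| |(1:ℝ) - 1| :=
        abs_min_sub_min_le_max _ _ _ _
    _ ≤ |a - b| := by
        simp only [sub_self, abs_zero]
        exact max_le (abs_max_sub_max_le_abs a b 0) (abs_nonneg _)

set_option maxHeartbeats 1600000 in
/-- For every `μ ∈ D(B)` with transferred Radon measure `ν = μ̂`, the
image `B̂` of `B` under the Gelfand transform is dense in the real Hilbert space
`L²(Δ, μ̂; ℝ)`. -/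
theorem gelfand_image_dense_in_L2 {X : Type*} [Nonempty X] [TopologicalSpace X] [DiscreteTopology X]
    (B : Set (X →ᵇ ℝ))
    (hBadd : ∀ f ∈ B, ∀ g ∈ B, f + g ∈ B)
    (hBsmul : ∀ (c : ℝ), ∀ f ∈ B, c • f ∈ B)
    (hBmax : ∀ f ∈ B, ∀ g ∈ B, ∃ h ∈ B, ∀ x, h x = max (f x) (g x))
    (hBmin : ∀ f ∈ B, ∀ g ∈ B, ∃ h ∈ B, ∀ x, h x = min (f x) (g x))
    (hBmul : ∀ f ∈ B, ∀ g ∈ B, f * g ∈ B)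
    (hBstone : ∀ f ∈ B, ∃ h ∈ B, ∀ x, h x = min (f x) 1)
    (hBnv : ∀ x : X, ∃ f ∈ B, f x ≠ 0)
    {Δ : Type*} [TopologicalSpace Δ] [LocallyCompactSpace Δ] [T2Space Δ]
    [MeasurableSpace Δ] [BorelSpace Δ]
    (ι : X → Δ) (hι : DenseRange ι)
    (G : (X →ᵇ ℂ) → C₀(Δ, ℂ))
    (hGeval : ∀ a ∈ AofB B, ∀ x : X, G a (ι x) = a x)
    (hGsurj : ∀ h : C₀(Δ, ℂ), ∃ a ∈ AofB B, G a = h)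
    {mX : MeasurableSpace X}
    (hmX : mX = ⨆ f ∈ B, MeasurableSpace.comap (⇑f : X → ℝ) inferInstance)
    (μ : Measure X) (hμ : ∀ f ∈ B, Integrable (⇑f) μ)
    (ν : Measure Δ) (hνreg : ν.Regular)
    (hν : ∀ f ∈ B, Integrable (fun φ => ((G (cplx f)) φ).re) ν ∧
      ∫ x, f x ∂μ = ∫ φ, ((G (cplx f)) φ).re ∂ν)
:
    Dense {h : Lp ℝ 2 ν | ∃ f ∈ B, (⇑h : Δ → ℝ) =ᵐ[ν] fun φ => ((G (cplx f)) φ).re} := by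
  classical
  haveI := hνreg
  set T : (X →ᵇ ℝ) → Δ → ℝ := fun f φ => ((G (cplx f)) φ).re with hTdef
  -- `0 ∈ B`
  obtain ⟨f₀, hf₀, -⟩ := hBnv (Classical.arbitrary X)
  have h0B : (0 : X →ᵇ ℝ) ∈ B := by simpa using hBsmul 0 f₀ hf₀
  -- complexifications of elements of `B` lie in `A(B)`
  have hmemA : ∀ f ∈ B, cplx f ∈ AofB B := by
    intro f hf
    apply subset_closure
    refine ⟨f, hf, 0, h0B, ?_⟩
    ext x
    have : cplx (0 : X →ᵇ ℝ) x = ((0 : X →ᵇ ℝ) x : ℂ) := rfl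
    simp [this]
  have hTcont : ∀ f : X →ᵇ ℝ, Continuous (T f) := fun f =>
    Complex.continuous_re.comp (map_continuous (G (cplx f)))
  have hTeval : ∀ f ∈ B, ∀ x, T f (ι x) = f x := by
    intro f hf x
    simp only [hTdef]
    rw [hGeval _ (hmemA f hf) x]
    have : cplx f x = ((f x : ℝ) : ℂ) := rfl
    simp [this]
  -- The key rigidity property: `T f` is determined by its values on the dense range of `ι`.
  have keyT : ∀ f ∈ B, ∀ u : Δ → ℝ, Continuous u → (∀ x, u (ι x) = f x) → T f = u := by
    intro f hf u hu hux
    apply hι.equalizer (hTcont f) hu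
    funext x
    simp only [Function.comp_apply]
    rw [hTeval f hf x, hux x]
  have hTmul : ∀ f ∈ B, ∀ g ∈ B, T (f * g) = fun φ => T f φ * T g φ := by
    intro f hf g hg
    refine keyT _ (hBmul f hf g hg) _ ((hTcont f).mul (hTcont g)) ?_
    intro x
    simp [hTeval f hf x, hTeval g hg x]
  have hTmeas : ∀ f : X →ᵇ ℝ, AEStronglyMeasurable (T f) ν := fun f =>
    (hTcont f).aestronglyMeasurable
  have hTmem : ∀ f ∈ B, MemLp (T f) 2 ν := by
    intro f hf
    rw [memLp_two_iff_integrable_sq (hTmeas f)]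
    have h1 : Integrable (T (f * f)) ν := (hν (f * f) (hBmul f hf f hf)).1
    rw [hTmul f hf f hf] at h1
    refine h1.congr (ae_of_all _ fun φ => ?_)
    ring
  -- Uniform approximation of `C₀` functions by Gelfand transforms of elements of `B`.
  have approx : ∀ u : Δ → ℝ, Continuous u → Tendsto u (cocompact Δ) (𝓝 0) →
      ∀ δ : ℝ, 0 < δ → ∃ f ∈ B, ∀ φ, |T f φ - u φ| ≤ δ := by
    intro u hu hu0 δ hδ
    set h : C₀(Δ, ℂ) := ⟨⟨fun φ => (u φ : ℂ), Complex.continuous_ofReal.comp hu⟩, by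
      simpa [Function.comp_def] using (Complex.continuous_ofReal.tendsto 0).comp hu0⟩ with hh
    obtain ⟨a, haA, hGa⟩ := hGsurj h
    have haA' : a ∈ closure {b : X →ᵇ ℂ | ∃ f ∈ B, ∃ g ∈ B, b = cplx f + Complex.I • cplx g} := haA
    obtain ⟨b, hbS, hab⟩ := Metric.mem_closure_iff.1 haA' δ hδ
    obtain ⟨f, hf, g', hg', rfl⟩ := hbS
    have hbA : cplx f + Complex.I • cplx g' ∈ AofB B :=
      subset_closure ⟨f, hf, g', hg', rfl⟩
    refine ⟨f, hf, ?_⟩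
    have hTf : T f = fun φ => (G (cplx f + Complex.I • cplx g') φ).re := by
      refine keyT f hf _ (Complex.continuous_re.comp (map_continuous _)) ?_
      intro x
      rw [hGeval _ hbA x]
      have h1 : cplx f x = ((f x : ℝ) : ℂ) := rfl
      have h2 : cplx g' x = ((g' x : ℝ) : ℂ) := rfl
      simp [h1, h2]
    have hclosed : IsClosed {φ : Δ | |(G (cplx f + Complex.I • cplx g') φ).re - u φ| ≤ δ} := by
      apply isClosed_le _ continuous_const
      exact ((Complex.continuous_re.comp (map_continuous _)).sub hu).abs
    have hsub : Set.range ι ⊆ {φ : Δ | |(G (cplx f + Complex.I • cplx g') φ).re - u φ| ≤ δ} := by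
      rintro _ ⟨x, rfl⟩
      have h1 : (G (cplx f + Complex.I • cplx g')) (ι x) = (cplx f + Complex.I • cplx g') x :=
        hGeval _ hbA x
      have h2 : (u (ι x) : ℂ) = a x := by
        have h3 := hGeval a haA x
        rw [hGa] at h3
        exact h3
      have h4 : u (ι x) = (a x).re := by rw [← h2]; exact (Complex.ofReal_re _).symm
      simp only [Set.mem_setOf_eq, h1, h4]
      have h5 : |((cplx f + Complex.I • cplx g') x).re - (a x).re| ≤
          ‖(cplx f + Complex.I • cplx g') x - a x‖ := by
        rw [← Complex.sub_re]
        exact Complex.abs_re_le_norm _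
      refine h5.trans ?_
      have h6 : ‖(cplx f + Complex.I • cplx g') x - a x‖ =
          dist ((cplx f + Complex.I • cplx g') x) (a x) := (Complex.dist_eq _ _).symm
      rw [h6]
      calc dist ((cplx f + Complex.I • cplx g') x) (a x)
          ≤ dist (cplx f + Complex.I • cplx g') a := dist_coe_le_dist x
        _ = dist a (cplx f + Complex.I • cplx g') := dist_comm _ _
        _ ≤ δ := hab.le
    intro φ
    have hφ : φ ∈ closure (Set.range ι) := hι φ
    have hm := closure_mono hsub hφ
    rw [hclosed.closure_eq] at hm
    rw [hTf]
    exact hm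
  -- Clamping to `[0,1]` inside `B`.
  have clampB : ∀ p ∈ B, ∃ p' ∈ B, T p' = fun φ => min (max (T p φ) 0) 1 := by
    intro p hp
    obtain ⟨pm, hpm, hpme⟩ := hBmax p hp 0 h0B
    obtain ⟨p', hp', hp'e⟩ := hBstone pm hpm
    refine ⟨p', hp', keyT p' hp' _ (((hTcont p).max continuous_const).min continuous_const) ?_⟩
    intro x
    rw [hp'e x, hpme x]
    simp [hTeval p hp x]
  -- Density of compactly supported continuous functions in `L²(ν)`.
  have hCc : ∀ F : Δ → ℝ, MemLp F 2 ν → ∀ ε' : ℝ≥0∞, ε' ≠ 0 →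
      ∃ g : Δ → ℝ, eLpNorm (F - g) 2 ν ≤ ε' ∧ (Continuous g ∧ HasCompactSupport g) := by
    intro F hF ε' hε'
    refine hF.induction_dense (by norm_num) _ ?_ ?_ ?_ hε'
    · intro c s hs hsfin ε'' hε''
      rcases eq_or_ne c 0 with rfl | hc
      · refine ⟨0, ?_, continuous_const, by
          simpa [HasCompactSupport, tsupport, Function.support] using isCompact_empty⟩
        simp
      -- choose the tolerance
      set ε₀ : ℝ≥0∞ := min ε'' 1 with hε₀def
      have hε₀ : ε₀ ≠ 0 := by
        simp only [hε₀def, ne_eq, min_eq_iff]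
        intro h
        rcases h with ⟨h, -⟩ | ⟨h, -⟩
        · exact hε'' h
        · exact one_ne_zero h
      set t : ℝ≥0∞ := ε₀ / (‖c‖₊ : ℝ≥0∞) with htdef
      have ht0 : t ≠ 0 := by
        refine ENNReal.div_ne_zero.2 ⟨hε₀, ENNReal.coe_ne_top⟩
      set η : ℝ≥0∞ := t^2 / 2 with hηdef
      have hη : η ≠ 0 := by
        simp only [hηdef, ENNReal.div_eq_zero_iff, pow_eq_zero_iff, ne_eq, OfNat.ofNat_ne_zero,
          not_false_iff]
        push_neg
        exact ⟨fun h => ht0 (by simpa using h), by norm_num⟩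
      have h2η : 2 * η = t^2 := by
        rw [hηdef]
        exact ENNReal.mul_div_cancel' (by norm_num) (by norm_num)
      -- inner compact, outer open
      obtain ⟨K, hKs, hKc, hKdiff⟩ := hs.exists_isCompact_diff_lt hsfin.ne hη
      have hKfin : ν K ≠ ⊤ := (lt_of_le_of_lt (measure_mono hKs) hsfin).ne
      obtain ⟨U, hKU, hUo, hUlt⟩ := Set.exists_isOpen_lt_of_lt K (ν K + η)
        (ENNReal.lt_add_right hKfin hη)
      have hUdiff : ν (U \ K) < η :=
        measure_diff_lt_of_lt_add hKc.isClosed.nullMeasurableSet hKU hKfin hUlt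
      -- Urysohn
      obtain ⟨χ, hχ1, hχ0, hχc, hχ01⟩ := exists_continuous_one_zero_of_isCompact hKc
        hUo.isClosed_compl (disjoint_compl_right_iff.mpr hKU)
      refine ⟨fun φ => c * χ φ, ?_, continuous_const.mul χ.continuous, hχc.mul_left⟩
      set A : Set Δ := (U \ K) ∪ (s \ K) with hAdef
      have hAm : MeasurableSet A :=
        (hUo.measurableSet.diff hKc.isClosed.measurableSet).union
          (hs.diff hKc.isClosed.measurableSet)
      have hAν : ν A ≤ 2 * η := by
        calc ν A ≤ ν (U \ K) + ν (s \ K) := measure_union_le _ _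
          _ ≤ η + η := add_le_add hUdiff.le hKdiff.le
          _ = 2 * η := (two_mul η).symm
      have hpt : ∀ φ, ‖(fun φ => c * χ φ) φ - s.indicator (fun _ => c) φ‖ ≤
          ‖A.indicator (fun _ => c) φ‖ := by
        intro φ
        by_cases hφA : φ ∈ A
        · rw [Set.indicator_of_mem hφA]
          have h01 := hχ01 φ
          have h01' : 0 ≤ χ φ ∧ χ φ ≤ 1 := h01
          have habs : |χ φ - s.indicator (fun _ => (1:ℝ)) φ| ≤ 1 := by
            by_cases hφs : φ ∈ s
            · rw [Set.indicator_of_mem hφs, abs_le]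
              constructor <;> simp <;> linarith [h01'.1, h01'.2]
            · rw [Set.indicator_of_notMem hφs, abs_le]
              constructor <;> simp <;> linarith [h01'.1, h01'.2]
          have hfact : c * χ φ - s.indicator (fun _ => c) φ =
              c * (χ φ - s.indicator (fun _ => (1:ℝ)) φ) := by
            by_cases hφs : φ ∈ s
            · rw [Set.indicator_of_mem hφs, Set.indicator_of_mem hφs]; ring
            · rw [Set.indicator_of_notMem hφs, Set.indicator_of_notMem hφs]; ring
          rw [hfact]
          rw [Real.norm_eq_abs, Real.norm_eq_abs, abs_mul]
          calc |c| * |χ φ - s.indicator (fun _ => (1:ℝ)) φ| ≤ |c| * 1 :=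
                mul_le_mul_of_nonneg_left habs (abs_nonneg c)
            _ = |c| := mul_one _
        · -- off `A` the difference vanishes
          have hdiff0 : c * χ φ - s.indicator (fun _ => c) φ = 0 := by
            simp only [hAdef, Set.mem_union, Set.mem_diff, not_or, not_and, not_not] at hφA
            by_cases hφK : φ ∈ K
            · rw [hχ1 hφK, Set.indicator_of_mem (hKs hφK)]
              simp
            · have hφU : φ ∉ U := fun h => hφK (hφA.1 h)
              have hφs : φ ∉ s := fun h => hφK (hφA.2 h)
              rw [hχ0 hφU, Set.indicator_of_notMem hφs]
              simp
          rw [hdiff0]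
          simp
      calc eLpNorm ((fun φ => c * χ φ) - s.indicator fun _ => c) 2 ν
          ≤ eLpNorm (A.indicator fun _ => c) 2 ν := eLpNorm_mono hpt
        _ = ‖c‖₊ * ν A ^ (1 / (2:ℝ≥0∞).toReal) :=
            eLpNorm_indicator_const hAm (by norm_num) (by norm_num)
        _ ≤ ‖c‖₊ * (2 * η) ^ (1 / (2:ℝ≥0∞).toReal) := by
            gcongr
        _ = ‖c‖₊ * t := by
            rw [h2η]
            congr 1
            have : ((2:ℝ≥0∞)).toReal = 2 := by norm_num
            rw [this]
            rw [← ENNReal.rpow_natCast t 2, ← ENNReal.rpow_mul]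
            norm_num
        _ = ε₀ := by
            rw [htdef]
            exact ENNReal.mul_div_cancel' (fun h => absurd (by simpa using h) hc) (fun h => absurd h ENNReal.coe_ne_top)
        _ ≤ ε'' := min_le_left _ _
    · rintro f g ⟨hfc, hfs⟩ ⟨hgc, hgs⟩
      exact ⟨hfc.add hgc, hfs.add hgs⟩
    · rintro f ⟨hfc, -⟩
      exact hfc.aestronglyMeasurable
  -- Main density argument.
  rw [Metric.dense_iff]
  intro h₀ ε hε
  obtain ⟨g, hgnorm, hgcont, hgc⟩ := hCc (⇑h₀) (Lp.memLp h₀) (ENNReal.ofReal (ε/3))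
    (ENNReal.ofReal_pos.2 (by positivity)).ne'
  -- bound on `g`
  obtain ⟨M₀, hM₀⟩ : ∃ M₀ : ℝ, ∀ φ, ‖g φ‖ ≤ M₀ :=
    let ⟨M₀, hM₀⟩ := hgcont.norm.bddAbove_range_of_hasCompactSupport hgc.norm
    ⟨M₀, fun φ => hM₀ ⟨φ, rfl⟩⟩
  set M : ℝ := max M₀ 0 with hMdef
  have hM : ∀ φ, |g φ| ≤ M := fun φ => le_trans (hM₀ φ) (le_max_left _ _)
  have hM0 : 0 ≤ M := le_max_right _ _
  -- an open set of finite measure around the support of `g`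
  obtain ⟨U, hKU, hUo, hUlt⟩ := Set.exists_isOpen_lt_of_lt (tsupport g) (ν (tsupport g) + 1)
    (ENNReal.lt_add_right hgc.measure_lt_top.ne one_ne_zero)
  have hUfin : ν U < ⊤ :=
    hUlt.trans (ENNReal.add_lt_top.2 ⟨hgc.measure_lt_top, ENNReal.one_lt_top⟩)
  -- cutoff function
  obtain ⟨χ, hχ1, hχ0, hχc, hχ01⟩ := exists_continuous_one_zero_of_isCompact hgc
    hUo.isClosed_compl (disjoint_compl_right_iff.mpr hKU)
  -- a fixed element of `B` whose transform is close to `χ`, clamped to `[0,1]`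
  obtain ⟨p₁, hp₁, hp₁b⟩ := approx χ χ.continuous hχc.is_zero_at_infty (1/4) (by norm_num)
  obtain ⟨P₁, hP₁, hP₁T⟩ := clampB p₁ hp₁
  have hP₁01 : ∀ φ, 0 ≤ T P₁ φ ∧ T P₁ φ ≤ 1 := by
    intro φ
    rw [hP₁T]
    exact ⟨le_min (le_max_right _ _) zero_le_one, min_le_right _ _⟩
  have hP₁χ : ∀ φ, |T P₁ φ - χ φ| ≤ 1/4 := by
    intro φ
    rw [hP₁T]
    exact (clamp_abs_le_aux (hχ01 φ)).trans (hp₁b φ)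
  set C : ℝ≥0∞ := ∫⁻ φ, ENNReal.ofReal (T P₁ φ) ∂ν with hCdef
  have hCfin : C < ⊤ := by
    refine lt_of_le_of_lt (lintegral_mono fun φ => ?_) (hν P₁ hP₁).1.hasFiniteIntegral
    exact Real.ofReal_le_enorm _
  -- the core approximation step
  have core : ∃ q ∈ B, eLpNorm (fun φ => g φ - T q φ) 2 ν ≤ ENNReal.ofReal (ε/3) := by
    set u₀ : ℝ := (ν U).toReal with hu₀def
    set c₀ : ℝ := C.toReal with hc₀def
    have hu₀0 : 0 ≤ u₀ := ENNReal.toReal_nonneg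
    have hc₀0 : 0 ≤ c₀ := ENNReal.toReal_nonneg
    set D : ℝ := (1 + M)^2 * u₀ + 2 * c₀ with hDdef
    have hD0 : 0 ≤ D := by positivity
    set δ : ℝ := (ε/3) / Real.sqrt (D + 1) with hδdef
    have hsq : 0 < Real.sqrt (D + 1) := Real.sqrt_pos.2 (by linarith)
    have hδ : 0 < δ := by positivity
    -- approximants
    obtain ⟨f, hfB, hfb⟩ := approx g hgcont hgc.is_zero_at_infty δ hδ
    obtain ⟨p₂, hp₂, hp₂b⟩ := approx χ χ.continuous hχc.is_zero_at_infty δ hδ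
    obtain ⟨P₂, hP₂, hP₂T⟩ := clampB p₂ hp₂
    have hP₂01 : ∀ φ, 0 ≤ T P₂ φ ∧ T P₂ φ ≤ 1 := by
      intro φ
      rw [hP₂T]
      exact ⟨le_min (le_max_right _ _) zero_le_one, min_le_right _ _⟩
    have hP₂χ : ∀ φ, |T P₂ φ - χ φ| ≤ δ := by
      intro φ
      rw [hP₂T]
      exact (clamp_abs_le_aux (hχ01 φ)).trans (hp₂b φ)
    obtain ⟨r, hrB, hre⟩ := hBmin P₂ hP₂ ((2:ℝ) • P₁) (hBsmul 2 P₁ hP₁)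
    have hTr : T r = fun φ => min (T P₂ φ) (2 * T P₁ φ) := by
      refine keyT r hrB _ ((hTcont P₂).min (continuous_const.mul (hTcont P₁))) ?_
      intro x
      rw [hre x]
      simp [hTeval P₂ hP₂ x, hTeval P₁ hP₁ x]
    set q : X →ᵇ ℝ := f * r with hqdef
    have hqB : q ∈ B := hBmul f hfB r hrB
    have hTq : ∀ φ, T q φ = T f φ * T r φ := by
      intro φ
      rw [hqdef, hTmul f hfB r hrB]
    have hTr0 : ∀ φ, 0 ≤ T r φ := by
      intro φ
      rw [hTr]
      exact le_min (hP₂01 φ).1 (by have := (hP₁01 φ).1; linarith)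
    have hTr1 : ∀ φ, T r φ ≤ 1 := by
      intro φ
      rw [hTr]
      exact (min_le_left _ _).trans (hP₂01 φ).2
    -- pointwise bound everywhere
    have claim1 : ∀ φ, |g φ - T q φ| ≤ δ * (1 + M) := by
      intro φ
      have habs := abs_le.1 (hfb φ)
      have ht0 := hTr0 φ
      have ht1 := hTr1 φ
      rw [hTq]
      by_cases hφK : φ ∈ tsupport g
      · have hχφ : χ φ = 1 := hχ1 hφK
        have h1 : 1 - δ ≤ T r φ := by
          rw [hTr]
          have h2 := abs_le.1 (hP₂χ φ)
          have h3 := abs_le.1 (hP₁χ φ)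
          rw [hχφ] at h2 h3
          refine le_min (by linarith [h2.1]) (by linarith [h3.1])
        have hgM := abs_le.1 (hM φ)
        rw [abs_le]
        constructor <;> nlinarith [habs.1, habs.2, hgM.1, hgM.2]
      · have hg0 : g φ = 0 := image_eq_zero_of_notMem_tsupport hφK
        rw [hg0] at habs ⊢
        rw [abs_le]
        constructor <;> nlinarith [habs.1, habs.2]
    -- pointwise bound off `U`
    have claim2 : ∀ φ ∉ U, (g φ - T q φ)^2 ≤ 2 * δ^2 * T P₁ φ := by
      intro φ hφ
      have hχφ : χ φ = 0 := hχ0 hφ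
      have hg0 : g φ = 0 := image_eq_zero_of_notMem_tsupport fun hmem => hφ (hKU hmem)
      have habs := abs_le.1 (hfb φ)
      rw [hg0] at habs
      have hP₂small : T P₂ φ ≤ δ := by
        have := abs_le.1 (hP₂χ φ)
        rw [hχφ] at this
        linarith [this.2]
      have hrle : T r φ ≤ 2 * T P₁ φ := by rw [hTr]; exact min_le_right _ _
      have hrle2 : T r φ ≤ 1 := hTr1 φ
      have hr0 : 0 ≤ T r φ := hTr0 φ
      rw [hg0, hTq]
      have hP₁0 := (hP₁01 φ).1
      have hTf2 : T f φ ^ 2 ≤ δ ^ 2 := by nlinarith [habs.1, habs.2]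
      have hTr2 : T r φ ^ 2 ≤ 2 * T P₁ φ := by nlinarith [hr0, hrle2, hrle]
      calc (0 - T f φ * T r φ)^2 = (T f φ ^ 2) * (T r φ ^ 2) := by ring
        _ ≤ δ^2 * (2 * T P₁ φ) := by
            exact mul_le_mul hTf2 hTr2 (sq_nonneg _) (by positivity)
        _ = 2 * δ^2 * T P₁ φ := by ring
    refine ⟨q, hqB, ?_⟩
    -- pass to the lintegral of the square
    have h2 : eLpNorm (fun φ => g φ - T q φ) 2 ν =
        (∫⁻ φ, (‖g φ - T q φ‖₊ : ℝ≥0∞) ^ (2:ℝ) ∂ν) ^ (1/2 : ℝ) := by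
      rw [eLpNorm_eq_lintegral_rpow_enorm_toReal (by norm_num) (by norm_num)]
      norm_num [enorm_eq_nnnorm]
    rw [h2]
    have hEbound : (∫⁻ φ, (‖g φ - T q φ‖₊ : ℝ≥0∞) ^ (2:ℝ) ∂ν) ≤
        ENNReal.ofReal ((ε/3)^2) := by
      have hsplit := lintegral_add_compl (μ := ν)
        (fun φ => (‖g φ - T q φ‖₊ : ℝ≥0∞) ^ (2:ℝ)) hUo.measurableSet
      rw [← hsplit]
      have hptU : ∀ φ, (‖g φ - T q φ‖₊ : ℝ≥0∞) ^ (2:ℝ) ≤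
          ENNReal.ofReal ((δ * (1 + M))^2) := by
        intro φ
        rw [← enorm_eq_nnnorm, ← ofReal_norm,
          ENNReal.ofReal_rpow_of_nonneg (norm_nonneg _) (by norm_num)]
        apply ENNReal.ofReal_le_ofReal
        have hr2 : ‖g φ - T q φ‖ ^ (2:ℝ) = |g φ - T q φ| ^ 2 := by
          rw [show ((2:ℝ)) = ((2:ℕ):ℝ) by norm_num, Real.rpow_natCast]
          rfl
        rw [hr2]
        have := claim1 φ
        nlinarith [abs_nonneg (g φ - T q φ), this]
      have hpiece1 : (∫⁻ φ in U, (‖g φ - T q φ‖₊ : ℝ≥0∞) ^ (2:ℝ) ∂ν) ≤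
          ENNReal.ofReal ((δ * (1 + M))^2) * ν U := by
        calc (∫⁻ φ in U, (‖g φ - T q φ‖₊ : ℝ≥0∞) ^ (2:ℝ) ∂ν)
            ≤ ∫⁻ _ in U, ENNReal.ofReal ((δ * (1 + M))^2) ∂ν :=
              lintegral_mono fun φ => hptU φ
          _ = ENNReal.ofReal ((δ * (1 + M))^2) * ν U := by
              rw [setLIntegral_const]
      have hpiece2 : (∫⁻ φ in Uᶜ, (‖g φ - T q φ‖₊ : ℝ≥0∞) ^ (2:ℝ) ∂ν) ≤
          ENNReal.ofReal (2 * δ^2) * C := by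
        have hpt : ∀ φ ∈ Uᶜ, (‖g φ - T q φ‖₊ : ℝ≥0∞) ^ (2:ℝ) ≤
            ENNReal.ofReal (2 * δ^2) * ENNReal.ofReal (T P₁ φ) := by
          intro φ hφ
          rw [← enorm_eq_nnnorm, ← ofReal_norm,
            ENNReal.ofReal_rpow_of_nonneg (norm_nonneg _) (by norm_num),
            ← ENNReal.ofReal_mul (by positivity)]
          apply ENNReal.ofReal_le_ofReal
          have hr2 : ‖g φ - T q φ‖ ^ (2:ℝ) = |g φ - T q φ| ^ 2 := by
            rw [show ((2:ℝ)) = ((2:ℕ):ℝ) by norm_num, Real.rpow_natCast]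
            rfl
          rw [hr2, sq_abs]
          exact claim2 φ hφ
        calc (∫⁻ φ in Uᶜ, (‖g φ - T q φ‖₊ : ℝ≥0∞) ^ (2:ℝ) ∂ν)
            ≤ ∫⁻ φ in Uᶜ, ENNReal.ofReal (2 * δ^2) * ENNReal.ofReal (T P₁ φ) ∂ν := by
              refine setLIntegral_mono ?_ hpt
              exact measurable_const.mul
                (ENNReal.measurable_ofReal.comp (hTcont P₁).measurable)
          _ ≤ ∫⁻ φ, ENNReal.ofReal (2 * δ^2) * ENNReal.ofReal (T P₁ φ) ∂ν :=
              setLIntegral_le_lintegral _ _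
          _ = ENNReal.ofReal (2 * δ^2) * C := by
              rw [hCdef, lintegral_const_mul' _ _ ENNReal.ofReal_ne_top]
      calc (∫⁻ φ in U, (‖g φ - T q φ‖₊ : ℝ≥0∞) ^ (2:ℝ) ∂ν) +
            (∫⁻ φ in Uᶜ, (‖g φ - T q φ‖₊ : ℝ≥0∞) ^ (2:ℝ) ∂ν)
          ≤ ENNReal.ofReal ((δ * (1 + M))^2) * ν U + ENNReal.ofReal (2 * δ^2) * C :=
            add_le_add hpiece1 hpiece2
        _ ≤ ENNReal.ofReal ((δ * (1 + M))^2 * u₀) + ENNReal.ofReal (2 * δ^2 * c₀) := by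
            refine add_le_add ?_ ?_
            · rw [ENNReal.ofReal_mul (by positivity), hu₀def,
                ENNReal.ofReal_toReal hUfin.ne]
            · rw [hc₀def, ENNReal.ofReal_mul (p := 2 * δ^2) (by positivity),
                ENNReal.ofReal_toReal hCfin.ne]
        _ ≤ ENNReal.ofReal ((ε/3)^2) := by
            rw [← ENNReal.ofReal_add (by positivity) (by positivity)]
            apply ENNReal.ofReal_le_ofReal
            have hδ2 : δ^2 = (ε/3)^2 / (D + 1) := by
              rw [hδdef, div_pow, Real.sq_sqrt (by linarith)]
            have hkey : (δ * (1 + M))^2 * u₀ + 2 * δ^2 * c₀ = δ^2 * D := by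
              rw [hDdef]; ring
            rw [hkey, hδ2]
            rw [div_mul_eq_mul_div, div_le_iff₀ (by linarith)]
            nlinarith [sq_nonneg (ε/3)]
    calc (∫⁻ φ, (‖g φ - T q φ‖₊ : ℝ≥0∞) ^ (2:ℝ) ∂ν) ^ (1/2 : ℝ)
        ≤ (ENNReal.ofReal ((ε/3)^2)) ^ (1/2 : ℝ) :=
          ENNReal.rpow_le_rpow hEbound (by norm_num)
      _ = ENNReal.ofReal (ε/3) := by
          rw [ENNReal.ofReal_rpow_of_nonneg (by positivity) (by norm_num)]
          congr 1
          rw [← Real.rpow_natCast (ε/3) 2, ← Real.rpow_mul (by positivity)]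
          norm_num
  obtain ⟨q, hqB, hqnorm⟩ := core
  -- conclude
  refine ⟨(hTmem q hqB).toLp (T q), ?_, ⟨q, hqB, (hTmem q hqB).coeFn_toLp⟩⟩
  rw [Metric.mem_ball]
  have hdist : dist ((hTmem q hqB).toLp (T q)) h₀ = (eLpNorm (⇑h₀ - T q) 2 ν).toReal := by
    rw [dist_comm, Lp.dist_def]
    congr 1
    apply eLpNorm_congr_ae
    filter_upwards [(hTmem q hqB).coeFn_toLp] with φ h2
    simp [h2]
  rw [hdist]
  have hle : eLpNorm (⇑h₀ - T q) 2 ν ≤ ENNReal.ofReal (ε/3) + ENNReal.ofReal (ε/3) := by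
    have hdecomp : (⇑h₀ - T q) = (⇑h₀ - g) + fun φ => g φ - T q φ := by
      funext φ
      simp [sub_add_sub_cancel]
    rw [hdecomp]
    refine (eLpNorm_add_le ((Lp.memLp h₀).aestronglyMeasurable.sub
      hgcont.aestronglyMeasurable) ((hgcont.sub (hTcont q)).aestronglyMeasurable)
      one_le_two).trans ?_
    exact add_le_add hgnorm hqnorm
  have : (eLpNorm (⇑h₀ - T q) 2 ν).toReal ≤ 2 * (ε/3) := by
    refine ENNReal.toReal_le_of_le_ofReal (by positivity) ?_
    refine hle.trans ?_
    rw [← ENNReal.ofReal_add (by positivity) (by positivity)]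
    apply ENNReal.ofReal_le_ofReal
    linarith
  linarith
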